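/- Let b ≥ 100, let f : [−b, b] → [0, ∞) be continuous, and let Z_NR, Z_R : [−b, b] → ℂ be continuously differentiable with |Z_NR′(t)| ≤ f(t)·b^{1/2}·(1+t²)^{−3/4}·|Z_R(t)| and |Z_R′(t)| ≤ f(t)·b^{−1/2}·(1+t²)^{−1/4}·|Z_NR(t)| for all t ∈ [−b, b]. Define E(t) = ((1+t²)^{1/2}/b)·|Z_NR(t)|² + |Z_R(t)|² for t ≤ 0 and E(t) = (1/b)·|Z_NR(t)|² + (1+t²)^{−1/2}·|Z_R(t)|² for t ≥ 0. Then for all T ∈ [−b, b]: E(T) ≤ exp( 2·∫_{−b}^{T} f(s)·(1+s²)^{−1/2} ds )·E(−b). -/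

import Mathlib

open Real Set MeasureTheory intervalIntegral

noncomputable section

lemma gronwall_aux (a c : ℝ) (hac : a ≤ c) (g : ℝ → ℝ) (hg : ContinuousOn g (Icc a c))
    (E : ℝ → ℝ) (hEc : ContinuousOn E (Icc a c))
    (hE : ∀ t ∈ Ioo a c, ∃ E', HasDerivAt E E' t ∧ E' ≤ g t * E t) :
    ∀ T ∈ Icc a c, E T ≤ Real.exp (∫ s in a..T, g s) * E a := by
  intro T hT
  set I : ℝ → ℝ := fun t => ∫ s in a..t, g s with hI
  have hIderiv : ∀ t ∈ Ioo a c, HasDerivAt I (g t) t := by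
    intro t ht
    have hsub : uIcc a t ⊆ Icc a c := by
      rw [uIcc_of_le ht.1.le]; exact Icc_subset_Icc le_rfl ht.2.le
    have hint : IntervalIntegrable g volume a t := (hg.mono hsub).intervalIntegrable
    have hca : ContinuousAt g t := hg.continuousAt (Icc_mem_nhds ht.1 ht.2)
    exact intervalIntegral.integral_hasDerivAt_right hint
      ((hg.mono Ioo_subset_Icc_self).stronglyMeasurableAtFilter isOpen_Ioo t ht) hca
  have hIcont : ContinuousOn I (Icc a c) := by
    have := intervalIntegral.continuousOn_primitive_interval
      (f := g) (μ := volume) (a := a) (b := c)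
      ((hg.mono (by rw [uIcc_of_le hac])).integrableOn_compact (isCompact_uIcc))
    rwa [uIcc_of_le hac] at this
  set F : ℝ → ℝ := fun t => Real.exp (-(I t)) * E t with hF
  have hFc : ContinuousOn F (Icc a c) :=
    (Real.continuous_exp.comp_continuousOn hIcont.neg).mul hEc
  have key : ∀ t ∈ Ioo a c, ∃ F', HasDerivAt F F' t ∧ F' ≤ 0 := by
    intro t ht
    obtain ⟨E', hE1, hE2⟩ := hE t ht
    refine ⟨_, (((hIderiv t ht).neg.exp).mul hE1), ?_⟩
    have h1 : (0:ℝ) < Real.exp (-(I t)) := Real.exp_pos _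
    have : Real.exp (-(I t)) * -(g t) * E t + Real.exp (-(I t)) * E' =
        Real.exp (-(I t)) * (E' - g t * E t) := by ring
    rw [Pi.neg_apply, this]
    exact mul_nonpos_of_nonneg_of_nonpos h1.le (sub_nonpos.mpr hE2)
  have hanti : AntitoneOn F (Icc a c) := by
    apply antitoneOn_of_deriv_nonpos (convex_Icc a c) hFc
    · rw [interior_Icc]
      intro x hx
      obtain ⟨F', h1, _⟩ := key x hx
      exact h1.differentiableAt.differentiableWithinAt
    · rw [interior_Icc]
      intro x hx
      obtain ⟨F', h1, h2⟩ := key x hx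
      rw [h1.deriv]; exact h2
  have hFa : F a = E a := by
    simp [hF, hI, intervalIntegral.integral_same]
  have hstep : F T ≤ E a := hFa ▸ hanti (left_mem_Icc.mpr hac) hT hT.1
  have : E T = Real.exp (I T) * F T := by
    rw [hF]; rw [← mul_assoc, ← Real.exp_add]; simp
  rw [this]
  exact mul_le_mul_of_nonneg_left hstep (Real.exp_pos _).le

lemma absSq_hasDerivAt {Z : ℝ → ℂ} {Z' : ℂ} {t : ℝ} (h : HasDerivAt Z Z' t) :
    HasDerivAt (fun s => ‖Z s‖ ^ 2)
      (2 * ((Z t).re * Z'.re + (Z t).im * Z'.im)) t := by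
  have hre : HasDerivAt (fun s => (Z s).re) Z'.re t :=
    (Complex.reCLM.hasFDerivAt.comp_hasDerivAt t h)
  have him : HasDerivAt (fun s => (Z s).im) Z'.im t :=
    (Complex.imCLM.hasFDerivAt.comp_hasDerivAt t h)
  have heq : (fun s => ‖Z s‖ ^ 2) =
      fun s => (Z s).re * (Z s).re + (Z s).im * (Z s).im := by
    funext s; rw [Complex.sq_norm, Complex.normSq_apply]
  rw [heq]
  exact ((hre.mul hre).add (him.mul him)).congr_deriv (by ring)

lemma absSq_deriv_bound (z w : ℂ) :
    2 * (z.re * w.re + z.im * w.im) ≤ 2 * ‖z‖ * ‖w‖ := by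
  have h1 : ((starRingEnd ℂ) z * w).re ≤ ‖(starRingEnd ℂ) z * w‖ :=
    Complex.re_le_norm _
  rw [norm_mul, Complex.norm_conj] at h1
  have h2 : ((starRingEnd ℂ) z * w).re = z.re * w.re + z.im * w.im := by
    simp [Complex.mul_re]
  rw [h2] at h1
  nlinarith

lemma amgm4 (F x y : ℝ) (hF : 0 ≤ F) :
    2 * F * (2 * x * y) ≤ 2 * F * (x ^ 2 + y ^ 2) :=
  mul_le_mul_of_nonneg_left (two_mul_le_add_sq x y) (by positivity)

lemma key_left {b u N R F : ℝ} (hb : 0 < b) (hu : 0 < u) (hF : 0 ≤ F) :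
    Real.sqrt u / b * (2 * N * (F * b ^ ((1:ℝ)/2) * u ^ (-(3/4) : ℝ) * R))
      + 2 * R * (F * b ^ (-(1:ℝ)/2) * u ^ (-(1/4) : ℝ) * N)
      ≤ 2 * (F * u ^ (-(1/2) : ℝ)) * (Real.sqrt u / b * N ^ 2 + R ^ 2) := by
  have hbne : b ≠ 0 := hb.ne'
  set P : ℝ := b ^ (-(1:ℝ)/2) with hP
  set Q : ℝ := u ^ (-(1/4) : ℝ) with hQ
  set s : ℝ := u ^ ((1:ℝ)/2) with hs
  set m : ℝ := u ^ (-(3/4) : ℝ) with hm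
  set w : ℝ := u ^ (-(1/2) : ℝ) with hw
  have e1 : Real.sqrt u = s := by rw [hs]; exact Real.sqrt_eq_rpow u
  have e2 : s * m = Q := by rw [hs, hm, hQ, ← Real.rpow_add hu]; norm_num
  have e3 : w * s = 1 := by rw [hw, hs, ← Real.rpow_add hu]; norm_num
  have e4 : P * P * b = 1 := by
    rw [hP, ← Real.rpow_add hb]
    norm_num [Real.rpow_neg_one, inv_mul_cancel₀ hbne]
  have e5 : Q * Q = w := by rw [hQ, hw, ← Real.rpow_add hu]; norm_num
  have hc : b ^ ((1:ℝ)/2) = P * b := by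
    rw [hP, ← Real.rpow_add_one hbne]
    norm_num
  rw [e1, hc]
  have lhs_eq : s / b * (2 * N * (F * (P * b) * m * R)) + 2 * R * (F * P * Q * N)
      = 2 * F * (2 * (P * N) * (Q * R)) := by
    field_simp
    linear_combination (2 * N * F * P * R * b) * e2 + (N * F * P * R * (1 - 2 * b)) * e2
  have rhs_eq : 2 * (F * w) * (s / b * N ^ 2 + R ^ 2)
      = 2 * F * ((P * N) ^ 2 + (Q * R) ^ 2) := by
    field_simp
    linear_combination (2 * F * N ^ 2) * e3 - (2 * F * N ^ 2 * w * s) * e4 - (2 * F * R ^ 2 * b) * e5 + (2 * F * N ^ 2 * (b * P * P - 1)) * e3 - (F * N ^ 2) * e3 + (F * N ^ 2) * e4 + (F * b * R ^ 2) * e5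
  rw [lhs_eq, rhs_eq]
  exact amgm4 F (P * N) (Q * R) hF

lemma key_right {b u N R F : ℝ} (hb : 0 < b) (hu : 0 < u) (hF : 0 ≤ F) :
    1 / b * (2 * N * (F * b ^ ((1:ℝ)/2) * u ^ (-(3/4) : ℝ) * R))
      + 2 * R * (F * b ^ (-(1:ℝ)/2) * u ^ (-(1/4) : ℝ) * N) / Real.sqrt u
      ≤ 2 * (F * u ^ (-(1/2) : ℝ)) * (1 / b * N ^ 2 + R ^ 2 / Real.sqrt u) := by
  have hbne : b ≠ 0 := hb.ne'
  set P : ℝ := b ^ (-(1:ℝ)/2) with hP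
  set Q : ℝ := u ^ (-(1/4) : ℝ) with hQ
  set s : ℝ := u ^ ((1:ℝ)/2) with hs
  set m : ℝ := u ^ (-(3/4) : ℝ) with hm
  set w : ℝ := u ^ (-(1/2) : ℝ) with hw
  have hspos : 0 < s := Real.rpow_pos_of_pos hu _
  have hsne : s ≠ 0 := hspos.ne'
  have e1 : Real.sqrt u = s := by rw [hs]; exact Real.sqrt_eq_rpow u
  have e2 : Q * w = m := by rw [hQ, hw, hm, ← Real.rpow_add hu]; norm_num
  have e3 : w * s = 1 := by rw [hw, hs, ← Real.rpow_add hu]; norm_num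
  have e4 : P * P * b = 1 := by
    rw [hP, ← Real.rpow_add hb]
    norm_num [Real.rpow_neg_one, inv_mul_cancel₀ hbne]
  have e5 : Q * Q = w := by rw [hQ, hw, ← Real.rpow_add hu]; norm_num
  have hc : b ^ ((1:ℝ)/2) = P * b := by
    rw [hP, ← Real.rpow_add_one hbne]
    norm_num
  rw [e1, hc]
  have lhs_eq : 1 / b * (2 * N * (F * (P * b) * m * R)) + 2 * R * (F * P * Q * N) / s
      = 2 * F * (2 * (P * Q * N) * (w * R)) := by
    field_simp
    linear_combination (-2 * N * F * P * R * b * s) * e2 + (-2 * R * F * P * Q * N * b) * e3 + (-N * F * P * R * (1 - 2 * b) * s) * e2 + (-N * F * P * R * (1 - 2 * b) * Q) * e3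
  have rhs_eq : 2 * (F * w) * (1 / b * N ^ 2 + R ^ 2 / s)
      = 2 * F * ((P * Q * N) ^ 2 + (w * R) ^ 2) := by
    field_simp
    linear_combination (2 * F * N ^ 2 * w * s) * e4.symm + (2 * F * R ^ 2 * b) * e3 - (2 * F * N ^ 2 * s) * e5 + (-2 * F * N ^ 2 * s * (b * P * P - 1)) * e5 + (-2 * F * R ^ 2 * b * (1 + w)) * e3 + (F * w * b * R ^ 2) * e3 + (F * N ^ 2 * s * Q ^ 2) * e4 + (F * N ^ 2 * s) * e5
  rw [lhs_eq, rhs_eq]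
  exact amgm4 F (P * Q * N) (w * R) hF



/-- The piecewise weighted energy of the two-mode resonance model:
`E(t) = ((1+t²)^{1/2}/b)|Z_NR|² + |Z_R|²` for `t ≤ 0` and
`E(t) = (1/b)|Z_NR|² + (1+t²)^{−1/2}|Z_R|²` for `t ≥ 0`. -/
def resEnergy (b : ℝ) (ZNR ZR : ℝ → ℂ) (t : ℝ) : ℝ :=
  if t ≤ 0 then
    (Real.sqrt (1 + t ^ 2) / b) * ‖ZNR t‖ ^ 2 + ‖ZR t‖ ^ 2
  else
    (1 / b) * ‖ZNR t‖ ^ 2 + ‖ZR t‖ ^ 2 / Real.sqrt (1 + t ^ 2)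

/-- energy estimate for the two-mode resonance model: for `b ≥ 100`,
`f ≥ 0` continuous and `Z_NR, Z_R` satisfying the coupled differential inequalities on
`[−b,b]`, the energy satisfies
`E(T) ≤ exp(2 ∫_{−b}^T f(s)(1+s²)^{−1/2} ds) E(−b)` for all `T ∈ [−b,b]`. -/
theorem statement17 (b : ℝ) (hb : 100 ≤ b) (f : ℝ → ℝ)
    (hf_cont : ContinuousOn f (Icc (-b) b))
    (hf_nonneg : ∀ t ∈ Icc (-b) b, 0 ≤ f t)
    (ZNR ZR ZNR' ZR' : ℝ → ℂ)
    (hZNR : ∀ t ∈ Icc (-b) b, HasDerivWithinAt ZNR (ZNR' t) (Icc (-b) b) t)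
    (hZR : ∀ t ∈ Icc (-b) b, HasDerivWithinAt ZR (ZR' t) (Icc (-b) b) t)
    (hZNR'c : ContinuousOn ZNR' (Icc (-b) b))
    (hZR'c : ContinuousOn ZR' (Icc (-b) b))
    (hineqNR : ∀ t ∈ Icc (-b) b, ‖ZNR' t‖ ≤
      f t * b ^ ((1 : ℝ) / 2) * (1 + t ^ 2) ^ (-(3 / 4) : ℝ) * ‖ZR t‖)
    (hineqR : ∀ t ∈ Icc (-b) b, ‖ZR' t‖ ≤
      f t * b ^ (-(1 : ℝ) / 2) * (1 + t ^ 2) ^ (-(1 / 4) : ℝ) * ‖ZNR t‖) :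
    ∀ T ∈ Icc (-b) b,
      resEnergy b ZNR ZR T ≤
        Real.exp (2 * ∫ s in (-b)..T, f s * (1 + s ^ 2) ^ (-(1 / 2) : ℝ)) *
          resEnergy b ZNR ZR (-b) := by
  have hb0 : (0:ℝ) < b := by linarith
  have hbne : b ≠ 0 := hb0.ne'
  have hnb0 : -b ≤ 0 := by linarith
  have h0b : (0:ℝ) ≤ b := hb0.le
  have hu : ∀ t : ℝ, (0:ℝ) < 1 + t ^ 2 := fun t => by positivity
  have hsq_pos : ∀ t : ℝ, (0:ℝ) < Real.sqrt (1 + t ^ 2) :=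
    fun t => Real.sqrt_pos.mpr (hu t)
  set g : ℝ → ℝ := fun s => 2 * (f s * (1 + s ^ 2) ^ (-(1/2) : ℝ)) with hgdef
  have hrpow_cont : Continuous fun s : ℝ => (1 + s ^ 2) ^ (-(1/2) : ℝ) :=
    Continuous.rpow_const (by continuity) (fun x => Or.inl (hu x).ne')
  have hg_cont : ContinuousOn g (Icc (-b) b) :=
    continuousOn_const.mul (hf_cont.mul hrpow_cont.continuousOn)
  have hZNRc : ContinuousOn ZNR (Icc (-b) b) := fun t ht => (hZNR t ht).continuousWithinAt
  have hZRc : ContinuousOn ZR (Icc (-b) b) := fun t ht => (hZR t ht).continuousWithinAt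
  set E := resEnergy b ZNR ZR with hE
  have hsubL : Icc (-b) 0 ⊆ Icc (-b) b := Icc_subset_Icc le_rfl h0b
  have hsubR : Icc 0 b ⊆ Icc (-b) b := Icc_subset_Icc hnb0 le_rfl
  -- derivative helpers at interior points
  have hderivNR : ∀ t ∈ Ioo (-b) b, HasDerivAt ZNR (ZNR' t) t := fun t ht =>
    (hZNR t (Ioo_subset_Icc_self ht)).hasDerivAt (Icc_mem_nhds ht.1 ht.2)
  have hderivR : ∀ t ∈ Ioo (-b) b, HasDerivAt ZR (ZR' t) t := fun t ht =>
    (hZR t (Ioo_subset_Icc_self ht)).hasDerivAt (Icc_mem_nhds ht.1 ht.2)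
  have hsqrtderiv : ∀ t : ℝ, HasDerivAt (fun s => Real.sqrt (1 + s ^ 2))
      (t / Real.sqrt (1 + t ^ 2)) t := by
    intro t
    have h1 : HasDerivAt (fun s : ℝ => 1 + s ^ 2) (2 * t) t := by
      simpa using (hasDerivAt_pow 2 t).const_add 1
    have h2 := h1.sqrt (hu t).ne'
    convert h2 using 1
    have h3 : Real.sqrt (1 + t ^ 2) ≠ 0 := (hsq_pos t).ne'
    field_simp
  -- Left interval
  have hELeq : EqOn E (fun t => Real.sqrt (1 + t ^ 2) / b * ‖ZNR t‖ ^ 2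
      + ‖ZR t‖ ^ 2) (Icc (-b) 0) := by
    intro t ht
    simp only [hE, resEnergy, if_pos ht.2]
  have hELcont : ContinuousOn (fun t => Real.sqrt (1 + t ^ 2) / b * ‖ZNR t‖ ^ 2
      + ‖ZR t‖ ^ 2) (Icc (-b) 0) := by
    apply ContinuousOn.add
    · exact (((continuous_const.add (continuous_pow 2)).sqrt.div_const b).continuousOn).mul
        ((continuous_norm.comp_continuousOn (hZNRc.mono hsubL)).pow 2)
    · exact (continuous_norm.comp_continuousOn (hZRc.mono hsubL)).pow 2
  have hleft : ∀ T ∈ Icc (-b) 0, E T ≤ Real.exp (∫ s in (-b)..T, g s) * E (-b) := by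
    apply gronwall_aux (-b) 0 hnb0 g (hg_cont.mono hsubL) E (hELcont.congr hELeq)
    intro t ht
    have htI : t ∈ Ioo (-b) b := ⟨ht.1, lt_of_lt_of_le ht.2 h0b⟩
    have htIcc : t ∈ Icc (-b) b := Ioo_subset_Icc_self htI
    have hA := absSq_hasDerivAt (hderivNR t htI)
    have hB := absSq_hasDerivAt (hderivR t htI)
    have hEL' := (((hsqrtderiv t).div_const b).mul hA).add hB
    have heq : E =ᶠ[nhds t] (fun t => Real.sqrt (1 + t ^ 2) / b * ‖ZNR t‖ ^ 2
        + ‖ZR t‖ ^ 2) := by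
      filter_upwards [Iio_mem_nhds ht.2] with s hs
      simp only [hE, resEnergy, if_pos (le_of_lt (mem_Iio.mp hs))]
    refine ⟨_, hEL'.congr_of_eventuallyEq heq, ?_⟩
    set N := ‖ZNR t‖ with hN
    set R := ‖ZR t‖ with hR
    have hN0 : 0 ≤ N := norm_nonneg _
    have hR0 : 0 ≤ R := norm_nonneg _
    have hEt : E t = Real.sqrt (1 + t ^ 2) / b * N ^ 2 + R ^ 2 := hELeq ⟨ht.1.le, ht.2.le⟩
    have hDA : 2 * ((ZNR t).re * (ZNR' t).re + (ZNR t).im * (ZNR' t).im) ≤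
        2 * N * (f t * b ^ ((1 : ℝ) / 2) * (1 + t ^ 2) ^ (-(3 / 4) : ℝ) * R) :=
      (absSq_deriv_bound _ _).trans
        (mul_le_mul_of_nonneg_left (hineqNR t htIcc) (by positivity))
    have hDB : 2 * ((ZR t).re * (ZR' t).re + (ZR t).im * (ZR' t).im) ≤
        2 * R * (f t * b ^ (-(1 : ℝ) / 2) * (1 + t ^ 2) ^ (-(1 / 4) : ℝ) * N) :=
      (absSq_deriv_bound _ _).trans
        (mul_le_mul_of_nonneg_left (hineqR t htIcc) (by positivity))
    have hterm1 : t / Real.sqrt (1 + t ^ 2) / b * N ^ 2 ≤ 0 := by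
      apply mul_nonpos_of_nonpos_of_nonneg _ (by positivity)
      exact div_nonpos_of_nonpos_of_nonneg
        (div_nonpos_of_nonpos_of_nonneg ht.2.le (hsq_pos t).le) h0b
    calc t / Real.sqrt (1 + t ^ 2) / b * N ^ 2
          + Real.sqrt (1 + t ^ 2) / b * (2 * ((ZNR t).re * (ZNR' t).re + (ZNR t).im * (ZNR' t).im))
          + 2 * ((ZR t).re * (ZR' t).re + (ZR t).im * (ZR' t).im)
        ≤ 0 + Real.sqrt (1 + t ^ 2) / b *
            (2 * N * (f t * b ^ ((1 : ℝ) / 2) * (1 + t ^ 2) ^ (-(3 / 4) : ℝ) * R))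
          + 2 * R * (f t * b ^ (-(1 : ℝ) / 2) * (1 + t ^ 2) ^ (-(1 / 4) : ℝ) * N) := by
          refine add_le_add (add_le_add hterm1 ?_) hDB
          exact mul_le_mul_of_nonneg_left hDA (by positivity)
      _ ≤ 2 * (f t * (1 + t ^ 2) ^ (-(1/2) : ℝ)) *
            (Real.sqrt (1 + t ^ 2) / b * N ^ 2 + R ^ 2) := by
          rw [zero_add]
          exact key_left hb0 (hu t) (hf_nonneg t htIcc)
      _ = g t * E t := by rw [hEt]
  -- Right interval
  have hEReq : EqOn E (fun t => 1 / b * ‖ZNR t‖ ^ 2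
      + ‖ZR t‖ ^ 2 / Real.sqrt (1 + t ^ 2)) (Icc 0 b) := by
    intro t ht
    rcases eq_or_lt_of_le ht.1 with h | h
    · simp only [hE, resEnergy, ← h]
      norm_num
    · simp only [hE, resEnergy, if_neg (not_le.mpr h)]
  have hERcont : ContinuousOn (fun t => 1 / b * ‖ZNR t‖ ^ 2
      + ‖ZR t‖ ^ 2 / Real.sqrt (1 + t ^ 2)) (Icc 0 b) := by
    apply ContinuousOn.add
    · exact continuousOn_const.mul
        ((continuous_norm.comp_continuousOn (hZNRc.mono hsubR)).pow 2)
    · exact ((continuous_norm.comp_continuousOn (hZRc.mono hsubR)).pow 2).div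
        ((continuous_const.add (continuous_pow 2)).sqrt.continuousOn)
        (fun t _ => (hsq_pos t).ne')
  have hright : ∀ T ∈ Icc 0 b, E T ≤ Real.exp (∫ s in (0:ℝ)..T, g s) * E 0 := by
    apply gronwall_aux 0 b h0b g (hg_cont.mono hsubR) E (hERcont.congr hEReq)
    intro t ht
    have htI : t ∈ Ioo (-b) b := ⟨lt_of_le_of_lt hnb0 ht.1, ht.2⟩
    have htIcc : t ∈ Icc (-b) b := Ioo_subset_Icc_self htI
    have hA := absSq_hasDerivAt (hderivNR t htI)
    have hB := absSq_hasDerivAt (hderivR t htI)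
    have hER' := ((hA.const_mul (1 / b)).add
      (hB.div (hsqrtderiv t) (hsq_pos t).ne'))
    have heq : E =ᶠ[nhds t] (fun t => 1 / b * ‖ZNR t‖ ^ 2
        + ‖ZR t‖ ^ 2 / Real.sqrt (1 + t ^ 2)) := by
      filter_upwards [Ioi_mem_nhds ht.1] with s hs
      simp only [hE, resEnergy, if_neg (not_le.mpr (mem_Ioi.mp hs))]
    refine ⟨_, hER'.congr_of_eventuallyEq heq, ?_⟩
    set N := ‖ZNR t‖ with hN
    set R := ‖ZR t‖ with hR
    have hN0 : 0 ≤ N := norm_nonneg _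
    have hR0 : 0 ≤ R := norm_nonneg _
    have hEt : E t = 1 / b * N ^ 2 + R ^ 2 / Real.sqrt (1 + t ^ 2) :=
      hEReq ⟨ht.1.le, ht.2.le⟩
    have hDA : 2 * ((ZNR t).re * (ZNR' t).re + (ZNR t).im * (ZNR' t).im) ≤
        2 * N * (f t * b ^ ((1 : ℝ) / 2) * (1 + t ^ 2) ^ (-(3 / 4) : ℝ) * R) :=
      (absSq_deriv_bound _ _).trans
        (mul_le_mul_of_nonneg_left (hineqNR t htIcc) (by positivity))
    have hDB : 2 * ((ZR t).re * (ZR' t).re + (ZR t).im * (ZR' t).im) ≤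
        2 * R * (f t * b ^ (-(1 : ℝ) / 2) * (1 + t ^ 2) ^ (-(1 / 4) : ℝ) * N) :=
      (absSq_deriv_bound _ _).trans
        (mul_le_mul_of_nonneg_left (hineqR t htIcc) (by positivity))
    have hnum : 2 * ((ZR t).re * (ZR' t).re + (ZR t).im * (ZR' t).im) * Real.sqrt (1 + t ^ 2)
        - R ^ 2 * (t / Real.sqrt (1 + t ^ 2)) ≤
        2 * R * (f t * b ^ (-(1 : ℝ) / 2) * (1 + t ^ 2) ^ (-(1 / 4) : ℝ) * N) *
          Real.sqrt (1 + t ^ 2) := by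
      have h1 : 0 ≤ R ^ 2 * (t / Real.sqrt (1 + t ^ 2)) := by
        apply mul_nonneg (by positivity)
        exact div_nonneg ht.1.le (hsq_pos t).le
      have h2 := mul_le_mul_of_nonneg_right hDB (hsq_pos t).le
      linarith
    calc 1 / b * (2 * ((ZNR t).re * (ZNR' t).re + (ZNR t).im * (ZNR' t).im))
          + (2 * ((ZR t).re * (ZR' t).re + (ZR t).im * (ZR' t).im) * Real.sqrt (1 + t ^ 2)
            - R ^ 2 * (t / Real.sqrt (1 + t ^ 2))) / Real.sqrt (1 + t ^ 2) ^ 2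
        ≤ 1 / b * (2 * N * (f t * b ^ ((1 : ℝ) / 2) * (1 + t ^ 2) ^ (-(3 / 4) : ℝ) * R))
          + (2 * R * (f t * b ^ (-(1 : ℝ) / 2) * (1 + t ^ 2) ^ (-(1 / 4) : ℝ) * N) *
              Real.sqrt (1 + t ^ 2)) / Real.sqrt (1 + t ^ 2) ^ 2 := by
          refine add_le_add (mul_le_mul_of_nonneg_left hDA (by positivity)) ?_
          exact div_le_div_of_nonneg_right hnum (by positivity)
      _ = 1 / b * (2 * N * (f t * b ^ ((1 : ℝ) / 2) * (1 + t ^ 2) ^ (-(3 / 4) : ℝ) * R))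
          + 2 * R * (f t * b ^ (-(1 : ℝ) / 2) * (1 + t ^ 2) ^ (-(1 / 4) : ℝ) * N) /
              Real.sqrt (1 + t ^ 2) := by
          rw [pow_two (Real.sqrt (1 + t ^ 2)), mul_div_mul_right _ _ (hsq_pos t).ne']
      _ ≤ 2 * (f t * (1 + t ^ 2) ^ (-(1/2) : ℝ)) *
            (1 / b * N ^ 2 + R ^ 2 / Real.sqrt (1 + t ^ 2)) :=
          key_right hb0 (hu t) (hf_nonneg t htIcc)
      _ = g t * E t := by rw [hEt]
  -- combine
  intro T hT
  have hint : ∀ x y, x ∈ Icc (-b) b → y ∈ Icc (-b) b → IntervalIntegrable g volume x y := by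
    intro x y hx hy
    apply (hg_cont.mono _).intervalIntegrable
    rw [uIcc_eq_union]
    exact union_subset (Icc_subset_Icc hx.1 hy.2) (Icc_subset_Icc hy.1 hx.2)
  have hgl : ∀ T' : ℝ, (∫ s in (-b)..T', g s) =
      2 * ∫ s in (-b)..T', f s * (1 + s ^ 2) ^ (-(1 / 2) : ℝ) := by
    intro T'
    rw [hgdef]
    exact intervalIntegral.integral_const_mul 2 _
  rcases le_or_gt T 0 with hT0 | hT0
  · have := hleft T ⟨hT.1, hT0⟩
    rwa [hgl] at this
  · have h1 := hright T ⟨hT0.le, hT.2⟩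
    have h2 := hleft 0 ⟨hnb0, le_refl 0⟩
    have h3 : E T ≤ Real.exp (∫ s in (0:ℝ)..T, g s) *
        (Real.exp (∫ s in (-b)..(0:ℝ), g s) * E (-b)) :=
      h1.trans (mul_le_mul_of_nonneg_left h2 (Real.exp_pos _).le)
    have h4 : (∫ s in (-b)..(0:ℝ), g s) + (∫ s in (0:ℝ)..T, g s) = ∫ s in (-b)..T, g s :=
      intervalIntegral.integral_add_adjacent_intervals
        (hint _ _ (left_mem_Icc.mpr (by linarith)) ⟨hnb0, h0b⟩)
        (hint _ _ ⟨hnb0, h0b⟩ hT)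
    calc E T ≤ Real.exp (∫ s in (0:ℝ)..T, g s) *
          (Real.exp (∫ s in (-b)..(0:ℝ), g s) * E (-b)) := h3
      _ = Real.exp ((∫ s in (-b)..(0:ℝ), g s) + (∫ s in (0:ℝ)..T, g s)) * E (-b) := by
          rw [Real.exp_add]; ring
      _ = Real.exp (2 * ∫ s in (-b)..T, f s * (1 + s ^ 2) ^ (-(1 / 2) : ℝ)) * E (-b) := by
          rw [h4, hgl]


end
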